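/- arXiv:2112.07594 — 8 statements merged into one kernel-verified Lean document; each statement's English description precedes it below -/
import Mathlib

section
/- Let L be a finite slim lattice with Jir(L) = U ∪ V for chains U and V. For x ∈ L write u(x) for the largest element of U∪{0} below x and v(x) for the largest element of V∪{0} below x. Then for all x, y ∈ L: x ≤ y if and only if u(x) ≤ u(y) and v(x) ≤ v(y). -/
/-- In a finite slim lattice (with `Jir L = U ∪ V`, `U`, `V` disjoint chains),
with `u x` (resp. `v x`) the largest element of `U ∪ {⊥}` (resp. `V ∪ {⊥}`) below `x`,
we have `x ≤ y ↔ u x ≤ u y ∧ v x ≤ v y`. -/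
theorem stmt_1 {L : Type*} [Lattice L] [Fintype L] [OrderBot L] (U V : Set L)
    (hU : IsChain (· ≤ ·) U) (hV : IsChain (· ≤ ·) V) (hUV : Disjoint U V)
    (hJ : {a : L | SupIrred a} = U ∪ V)
    (u v : L → L)
    (hu : ∀ x : L, u x ∈ insert (⊥ : L) U ∧ u x ≤ x ∧
      ∀ w ∈ insert (⊥ : L) U, w ≤ x → w ≤ u x)
    (hv : ∀ x : L, v x ∈ insert (⊥ : L) V ∧ v x ≤ x ∧
      ∀ w ∈ insert (⊥ : L) V, w ≤ x → w ≤ v x) :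
    ∀ x y : L, x ≤ y ↔ (u x ≤ u y ∧ v x ≤ v y) := by
  have key : ∀ x : L, x ≤ u x ⊔ v x := by
    intro x
    obtain ⟨s, hs, hirr⟩ := exists_supIrred_decomposition x
    have step : s.sup id ≤ u x ⊔ v x := by
      apply Finset.sup_le
      intro b hb
      have : b ∈ U ∪ V := hJ ▸ hirr hb
      have hbx : b ≤ x := hs ▸ Finset.le_sup (f := id) hb
      rcases this with h | h
      · exact le_sup_of_le_left ((hu x).2.2 b (Set.mem_insert_of_mem _ h) hbx)
      · exact le_sup_of_le_right ((hv x).2.2 b (Set.mem_insert_of_mem _ h) hbx)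
    rwa [hs] at step
  intro x y
  constructor
  · intro hxy
    exact ⟨(hu y).2.2 _ (hu x).1 ((hu x).2.1.trans hxy),
           (hv y).2.2 _ (hv x).1 ((hv x).2.1.trans hxy)⟩
  · rintro ⟨h1, h2⟩
    exact (key x).trans (sup_le (h1.trans (hu y).2.1) (h2.trans (hv y).2.1))
end

section
/- Let L be a finite slim lattice with Jir(L) = U ∪ V for chains U, V. With u(x), v(x) as the largest elements of U∪{0} and V∪{0} below x, for all x, y ∈ L one has u(x ∧ y) = min(u(x), u(y)) and v(x ∧ y) = min(v(x), v(y)), where min is taken in the chains U∪{0} and V∪{0}. -/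
lemma chain_inf_aux {L : Type*} [Lattice L] [OrderBot L] (C : Set L)
    (hC : IsChain (· ≤ ·) C) (c : L → L)
    (hc : ∀ x : L, c x ∈ insert (⊥ : L) C ∧ c x ≤ x ∧
      ∀ w ∈ insert (⊥ : L) C, w ≤ x → w ≤ c x) :
    ∀ x y : L, c (x ⊓ y) = c x ⊓ c y := by
  intro x y
  obtain ⟨hm, hle, hmax⟩ := hc (x ⊓ y)
  obtain ⟨hmx, hlex, hmaxx⟩ := hc x
  obtain ⟨hmy, hley, hmaxy⟩ := hc y
  have hcomp : c x ≤ c y ∨ c y ≤ c x := by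
    rcases hmx with h | h
    · left; rw [h]; exact bot_le
    · rcases hmy with h' | h'
      · right; rw [h']; exact bot_le
      · rcases eq_or_ne (c x) (c y) with he | hne
        · left; exact he.le
        · exact hC h h' hne
  apply le_antisymm
  · exact le_inf (hmaxx _ hm (hle.trans inf_le_left))
      (hmaxy _ hm (hle.trans inf_le_right))
  · rcases hcomp with h | h
    · rw [inf_eq_left.mpr h]
      exact hmax _ hmx (le_inf hlex (h.trans hley))
    · rw [inf_eq_right.mpr h]
      exact hmax _ hmy (le_inf (h.trans hlex) hley)

/-- In a finite slim lattice, `u (x ⊓ y) = min (u x) (u y)` and `v (x ⊓ y) = min (v x) (v y)`,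
the minima being taken in the chains `U ∪ {⊥}` and `V ∪ {⊥}`; since the relevant elements are
comparable, these minima coincide with the lattice meets. -/
theorem stmt_2 {L : Type*} [Lattice L] [Fintype L] [OrderBot L] (U V : Set L)
    (hU : IsChain (· ≤ ·) U) (hV : IsChain (· ≤ ·) V)
    (hJ : {a : L | SupIrred a} = U ∪ V)
    (u v : L → L)
    (hu : ∀ x : L, u x ∈ insert (⊥ : L) U ∧ u x ≤ x ∧
      ∀ w ∈ insert (⊥ : L) U, w ≤ x → w ≤ u x)
    (hv : ∀ x : L, v x ∈ insert (⊥ : L) V ∧ v x ≤ x ∧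
      ∀ w ∈ insert (⊥ : L) V, w ≤ x → w ≤ v x) :
    ∀ x y : L, u (x ⊓ y) = u x ⊓ u y ∧ v (x ⊓ y) = v x ⊓ v y := by
  intro x y
  exact ⟨chain_inf_aux U hU u hu x y, chain_inf_aux V hV v hv x y⟩
end

section
/- Let L be a finite slim lattice and let a, b ∈ L be incomparable. Then the intervals [a∧b, a] and [a∧b, b] are chains. -/
private lemma exists_supIrred_sep {L : Type*} [Lattice L] [Fintype L] [OrderBot L]
    (x y : L) (h : ¬ x ≤ y) : ∃ p : L, SupIrred p ∧ p ≤ x ∧ ¬ p ≤ y := by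
  induction x using WellFoundedLT.induction with
  | _ x ih =>
    by_cases hx : SupIrred x
    · exact ⟨x, hx, le_rfl, h⟩
    · rw [SupIrred] at hx
      push_neg at hx
      by_cases hmin : IsMin x
      · exact absurd (hmin.eq_bot ▸ bot_le) h
      · obtain ⟨c, d, hcd, hc, hd⟩ := hx hmin
        have hcx : c < x := lt_of_le_of_ne (hcd ▸ le_sup_left) hc
        have hdx : d < x := lt_of_le_of_ne (hcd ▸ le_sup_right) hd
        rw [← hcd, sup_le_iff, not_and_or] at h
        rcases h with h | h
        · obtain ⟨p, hp, h1, h2⟩ := ih c hcx h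
          exact ⟨p, hp, h1.trans hcx.le, h2⟩
        · obtain ⟨p, hp, h1, h2⟩ := ih d hdx h
          exact ⟨p, hp, h1.trans hdx.le, h2⟩

private lemma chain_icc_aux {L : Type*} [Lattice L] [Fintype L] [OrderBot L] (U V : Set L)
    (hU : IsChain (· ≤ ·) U) (hV : IsChain (· ≤ ·) V)
    (hJ : {a : L | SupIrred a} = U ∪ V)
    (a b : L) (hab : ¬ a ≤ b) (hba : ¬ b ≤ a) :
    IsChain (· ≤ ·) (Set.Icc (a ⊓ b) a) := by
  intro x hx y hy hne
  by_contra hcon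
  push_neg at hcon
  obtain ⟨hxy, hyx⟩ := hcon
  obtain ⟨p, hpI, hpx, hpy⟩ := exists_supIrred_sep x y hxy
  obtain ⟨q, hqI, hqy, hqx⟩ := exists_supIrred_sep y x hyx
  obtain ⟨r, hrI, hrb, hra⟩ := exists_supIrred_sep b a hba
  -- basic facts
  have hpa : p ≤ a := hpx.trans hx.2
  have hqa : q ≤ a := hqy.trans hy.2
  have hpb : ¬ p ≤ b := fun h => hpy ((le_inf hpa h).trans hy.1)
  have hqb : ¬ q ≤ b := fun h => hqx ((le_inf hqa h).trans hx.1)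
  -- pairwise incomparability
  have hpq : ¬ p ≤ q := fun h => hpy (h.trans hqy)
  have hqp : ¬ q ≤ p := fun h => hqx (h.trans hpx)
  have hpr : ¬ p ≤ r := fun h => hpb (h.trans hrb)
  have hrp : ¬ r ≤ p := fun h => hra (h.trans hpa)
  have hqr : ¬ q ≤ r := fun h => hqb (h.trans hrb)
  have hrq : ¬ r ≤ q := fun h => hra (h.trans hqa)
  -- memberships
  have hpUV : p ∈ U ∪ V := hJ ▸ hpI
  have hqUV : q ∈ U ∪ V := hJ ▸ hqI
  have hrUV : r ∈ U ∪ V := hJ ▸ hrI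
  have tri : ∀ u v : L, ((u ∈ U ∧ v ∈ U) ∨ (u ∈ V ∧ v ∈ V)) → ¬ u ≤ v → ¬ v ≤ u → False := by
    rintro u v (⟨hu, hv⟩ | ⟨hu, hv⟩) h1 h2
    · rcases hU hu hv (fun e => h1 (e ▸ le_rfl)) with h | h
      exacts [h1 h, h2 h]
    · rcases hV hu hv (fun e => h1 (e ▸ le_rfl)) with h | h
      exacts [h1 h, h2 h]
  rcases hpUV with hp | hp <;> rcases hqUV with hq | hq <;> rcases hrUV with hr | hr
  · exact tri p q (Or.inl ⟨hp, hq⟩) hpq hqp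
  · exact tri p q (Or.inl ⟨hp, hq⟩) hpq hqp
  · exact tri p r (Or.inl ⟨hp, hr⟩) hpr hrp
  · exact tri q r (Or.inr ⟨hq, hr⟩) hqr hrq
  · exact tri q r (Or.inl ⟨hq, hr⟩) hqr hrq
  · exact tri p r (Or.inr ⟨hp, hr⟩) hpr hrp
  · exact tri p q (Or.inr ⟨hp, hq⟩) hpq hqp
  · exact tri p q (Or.inr ⟨hp, hq⟩) hpq hqp

/-- In a finite slim lattice, if `a` and `b` are incomparable, then the intervals
`[a ⊓ b, a]` and `[a ⊓ b, b]` are chains. -/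
theorem stmt_3 {L : Type*} [Lattice L] [Fintype L] [OrderBot L] (U V : Set L)
    (hU : IsChain (· ≤ ·) U) (hV : IsChain (· ≤ ·) V)
    (hJ : {a : L | SupIrred a} = U ∪ V)
    (a b : L) (hab : ¬ a ≤ b) (hba : ¬ b ≤ a) :
    IsChain (· ≤ ·) (Set.Icc (a ⊓ b) a) ∧ IsChain (· ≤ ·) (Set.Icc (a ⊓ b) b) := by
  refine ⟨chain_icc_aux U V hU hV hJ a b hab hba, ?_⟩
  have := chain_icc_aux U V hU hV hJ b a hba hab
  rwa [inf_comm] at this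
end

section
/- Let L be a finite slim lattice and let a, b ∈ L be incomparable with c = a ∧ b. If u(a) < u(b) in the chain U∪{0}, then v(b) < v(a), and moreover every element x of the interval [c, a] satisfies u(x) = u(a). -/
/-- In a finite slim lattice (disjoint chains `U`, `V`), if `a ∥ b`, `c = a ⊓ b` and
`u a < u b`, then `v b < v a` and every `x ∈ [c, a]` satisfies `u x = u a`. -/
theorem stmt_4 {L : Type*} [Lattice L] [Fintype L] [OrderBot L] (U V : Set L)
    (hU : IsChain (· ≤ ·) U) (hV : IsChain (· ≤ ·) V) (hUV : Disjoint U V)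
    (hJ : {a : L | SupIrred a} = U ∪ V)
    (u v : L → L)
    (hu : ∀ x : L, u x ∈ insert (⊥ : L) U ∧ u x ≤ x ∧
      ∀ w ∈ insert (⊥ : L) U, w ≤ x → w ≤ u x)
    (hv : ∀ x : L, v x ∈ insert (⊥ : L) V ∧ v x ≤ x ∧
      ∀ w ∈ insert (⊥ : L) V, w ≤ x → w ≤ v x)
    (a b : L) (hab : ¬ a ≤ b) (hba : ¬ b ≤ a) (c : L) (hc : c = a ⊓ b)
    (huab : u a < u b) :
    v b < v a ∧ ∀ x ∈ Set.Icc c a, u x = u a := by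
  have hVchain : IsChain (· ≤ ·) (insert (⊥ : L) V) :=
    hV.insert (fun y _ _ => Or.inl bot_le)
  -- every element is u x ⊔ v x
  have key : ∀ x : L, x ≤ u x ⊔ v x := by
    have : WellFoundedLT L := Finite.to_wellFoundedLT
    intro x
    induction x using WellFoundedLT.induction with
    | _ x ih =>
      by_cases hirr : SupIrred x
      · have hx : x ∈ U ∪ V := by rw [← hJ]; exact hirr
        rcases hx with hx | hx
        · exact le_trans ((hu x).2.2 x (Set.mem_insert_of_mem _ hx) le_rfl) le_sup_left
        · exact le_trans ((hv x).2.2 x (Set.mem_insert_of_mem _ hx) le_rfl) le_sup_right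
      · rw [SupIrred, not_and_or] at hirr
        rcases hirr with hmin | hsup
        · push_neg at hmin
          rw [hmin.eq_bot]
          exact bot_le
        · push_neg at hsup
          obtain ⟨y, z, hyz, hy, hz⟩ := hsup
          subst hyz
          have hylt : y < y ⊔ z := lt_of_le_of_ne le_sup_left hy
          have hzlt : z < y ⊔ z := lt_of_le_of_ne le_sup_right hz
          have h1 : y ≤ u (y ⊔ z) ⊔ v (y ⊔ z) := le_trans (ih y hylt) (sup_le_sup
            ((hu (y ⊔ z)).2.2 _ (hu y).1 (le_trans (hu y).2.1 hylt.le))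
            ((hv (y ⊔ z)).2.2 _ (hv y).1 (le_trans (hv y).2.1 hylt.le)))
          have h2 : z ≤ u (y ⊔ z) ⊔ v (y ⊔ z) := le_trans (ih z hzlt) (sup_le_sup
            ((hu (y ⊔ z)).2.2 _ (hu z).1 (le_trans (hu z).2.1 hzlt.le))
            ((hv (y ⊔ z)).2.2 _ (hv z).1 (le_trans (hv z).2.1 hzlt.le)))
          exact sup_le h1 h2
  -- v b < v a
  have hvba : v b < v a := by
    have hnot : ¬ v a ≤ v b := by
      intro h
      apply hab
      calc a ≤ u a ⊔ v a := key a
        _ ≤ u b ⊔ v b := sup_le_sup huab.le h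
        _ ≤ b := sup_le (hu b).2.1 (hv b).2.1
    have hcomp : v b ≤ v a := by
      by_cases heq : v a = v b
      · exact absurd heq.le hnot
      · rcases hVchain (hv b).1 (hv a).1 (fun h => heq h.symm) with h | h
        · exact h
        · exact absurd h hnot
    exact lt_of_le_of_ne hcomp (fun h => hnot h.ge)
  refine ⟨hvba, fun x hx => ?_⟩
  -- u a ≤ c
  have huac : u a ≤ c := by
    rw [hc]
    exact le_inf (hu a).2.1 (le_trans huab.le (hu b).2.1)
  have h1 : u x ≤ u a := (hu a).2.2 _ (hu x).1 (le_trans (hu x).2.1 hx.2)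
  have h2 : u a ≤ u x := (hu x).2.2 _ (hu a).1 (le_trans huac hx.1)
  exact le_antisymm h1 h2
end

section
/- A finite slim lattice admits an order-embedding into the direct product of two finite chains that preserves meets. -/
noncomputable def chainLO {L : Type*} [Lattice L] {s : Set L} (hs : IsChain (· ≤ ·) s) :
    LinearOrder s :=
  { Subtype.partialOrder _ with
    le_total := fun a b => by
      rcases eq_or_ne a b with rfl | h
      · exact Or.inl le_rfl
      · exact hs.total a.2 b.2
    toDecidableLE := Classical.decRel _ }

/-- A finite slim lattice admits an order-embedding into the direct product of two finite
chains that preserves meets (the product being ordered componentwise, and the meet in the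
product being the componentwise minimum). -/
theorem stmt_6 {L : Type*} [Lattice L] [Fintype L] [OrderBot L] (U V : Set L)
    (hU : IsChain (· ≤ ·) U) (hV : IsChain (· ≤ ·) V)
    (hJ : {a : L | SupIrred a} = U ∪ V) :
    ∃ (α β : Type) (la : LinearOrder α) (lb : LinearOrder β),
      Finite α ∧ Finite β ∧
      ∃ f : L → α × β,
        (∀ x y : L, x ≤ y ↔ (la.le (f x).1 (f y).1 ∧ lb.le (f x).2 (f y).2)) ∧
        (∀ x y : L, f (x ⊓ y) = (la.min (f x).1 (f y).1, lb.min (f x).2 (f y).2)) := by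
  classical
  -- enlarge the chains with ⊥
  set U' : Set L := insert ⊥ U with hU'
  set V' : Set L := insert ⊥ V with hV'
  have hU'c : IsChain (· ≤ ·) U' := hU.insert (fun b _ _ => Or.inl bot_le)
  have hV'c : IsChain (· ≤ ·) V' := hV.insert (fun b _ _ => Or.inl bot_le)
  -- greatest elements below x
  have key : ∀ (s : Set L), IsChain (· ≤ ·) s → ⊥ ∈ s → ∀ x : L,
      ∃ a, (a ∈ s ∧ a ≤ x) ∧ ∀ b, b ∈ s → b ≤ x → b ≤ a := by
    intro s hs hbot x
    obtain ⟨a, ha, hmax⟩ := Set.Finite.exists_maximalFor id _ (Set.toFinite {b | b ∈ s ∧ b ≤ x})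
      ⟨⊥, hbot, bot_le⟩
    refine ⟨a, ha, fun b hb hbx => ?_⟩
    rcases eq_or_ne b a with rfl | hne
    · exact le_rfl
    · rcases hs.total hb ha.1 with h | h
      · exact h
      · exact hmax ⟨hb, hbx⟩ h
  choose u hu hu' using key U' hU'c (Set.mem_insert _ _)
  choose v hv hv' using key V' hV'c (Set.mem_insert _ _)
  -- every element is u x ⊔ v x
  have decomp : ∀ x : L, x = u x ⊔ v x := by
    intro x
    refine le_antisymm ?_ (sup_le (hu x).2 (hv x).2)
    obtain ⟨s, hsup, hirr⟩ := exists_supIrred_decomposition x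
    conv_lhs => rw [← hsup]
    refine Finset.sup_le fun b hb => ?_
    have hbx : b ≤ x := hsup ▸ Finset.le_sup (f := id) hb
    have : b ∈ U ∪ V := hJ ▸ hirr hb
    rcases this with h | h
    · exact le_sup_of_le_left (hu' x b (Set.mem_insert_of_mem _ h) hbx)
    · exact le_sup_of_le_right (hv' x b (Set.mem_insert_of_mem _ h) hbx)
  have umono : ∀ {x y : L}, x ≤ y → u x ≤ u y :=
    fun {x y} h => hu' y _ (hu x).1 ((hu x).2.trans h)
  have vmono : ∀ {x y : L}, x ≤ y → v x ≤ v y :=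
    fun {x y} h => hv' y _ (hv x).1 ((hv x).2.trans h)
  have umeet : ∀ x y : L, u (x ⊓ y) = u x ⊓ u y := by
    intro x y
    refine le_antisymm (le_inf (umono inf_le_left) (umono inf_le_right)) ?_
    have hcomp : u x ⊓ u y = u x ∨ u x ⊓ u y = u y := by
      rcases eq_or_ne (u x) (u y) with h | h
      · exact Or.inl (by rw [h, inf_idem])
      · rcases hU'c.total (hu x).1 (hu y).1 with h' | h'
        · exact Or.inl (inf_eq_left.2 h')
        · exact Or.inr (inf_eq_right.2 h')
    have hmem : u x ⊓ u y ∈ U' := by rcases hcomp with h | h <;> rw [h]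
      <;> [exact (hu x).1; exact (hu y).1]
    exact hu' _ _ hmem (le_inf (inf_le_left.trans (hu x).2) (inf_le_right.trans (hu y).2))
  have vmeet : ∀ x y : L, v (x ⊓ y) = v x ⊓ v y := by
    intro x y
    refine le_antisymm (le_inf (vmono inf_le_left) (vmono inf_le_right)) ?_
    have hcomp : v x ⊓ v y = v x ∨ v x ⊓ v y = v y := by
      rcases eq_or_ne (v x) (v y) with h | h
      · exact Or.inl (by rw [h, inf_idem])
      · rcases hV'c.total (hv x).1 (hv y).1 with h' | h'
        · exact Or.inl (inf_eq_left.2 h')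
        · exact Or.inr (inf_eq_right.2 h')
    have hmem : v x ⊓ v y ∈ V' := by rcases hcomp with h | h <;> rw [h]
      <;> [exact (hv x).1; exact (hv y).1]
    exact hv' _ _ hmem (le_inf (inf_le_left.trans (hv x).2) (inf_le_right.trans (hv y).2))
  letI loU : LinearOrder U' := chainLO hU'c
  letI loV : LinearOrder V' := chainLO hV'c
  let eU := equivShrink.{0} U'
  let eV := equivShrink.{0} V'
  letI la : LinearOrder (Shrink.{0} U') := LinearOrder.lift' eU.symm eU.symm.injective
  letI lb : LinearOrder (Shrink.{0} V') := LinearOrder.lift' eV.symm eV.symm.injective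
  have hla : ∀ a b : Shrink.{0} U', la.le a b ↔ (eU.symm a : L) ≤ (eU.symm b : L) := fun _ _ => Iff.rfl
  have hlb : ∀ a b : Shrink.{0} V', lb.le a b ↔ (eV.symm a : L) ≤ (eV.symm b : L) := fun _ _ => Iff.rfl
  refine ⟨Shrink.{0} U', Shrink.{0} V', la, lb, inferInstance, inferInstance,
    fun x => (eU ⟨u x, (hu x).1⟩, eV ⟨v x, (hv x).1⟩), fun x y => ?_, fun x y => ?_⟩
  · simp only [hla, hlb, Equiv.symm_apply_apply]
    constructor
    · intro h; exact ⟨umono h, vmono h⟩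
    · rintro ⟨h1, h2⟩
      calc x = u x ⊔ v x := decomp x
        _ ≤ u y ⊔ v y := sup_le_sup h1 h2
        _ ≤ y := sup_le (hu y).2 (hv y).2
  · refine Prod.ext ?_ ?_
    · show eU ⟨u (x ⊓ y), _⟩ = _
      rw [la.min_def]
      split_ifs with h
      · refine congrArg eU (Subtype.ext ?_)
        rw [hla, Equiv.symm_apply_apply, Equiv.symm_apply_apply] at h
        exact (umeet x y).trans (inf_eq_left.2 h)
      · refine congrArg eU (Subtype.ext ?_)
        rw [hla, Equiv.symm_apply_apply, Equiv.symm_apply_apply] at h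
        have h' : u y ≤ u x := by
          rcases eq_or_ne (u x) (u y) with he | hne
          · exact he.ge
          · exact (hU'c.total (hu x).1 (hu y).1).resolve_left h
        exact (umeet x y).trans (inf_eq_right.2 h')
    · show eV ⟨v (x ⊓ y), _⟩ = _
      rw [lb.min_def]
      split_ifs with h
      · refine congrArg eV (Subtype.ext ?_)
        rw [hlb, Equiv.symm_apply_apply, Equiv.symm_apply_apply] at h
        exact (vmeet x y).trans (inf_eq_left.2 h)
      · refine congrArg eV (Subtype.ext ?_)
        rw [hlb, Equiv.symm_apply_apply, Equiv.symm_apply_apply] at h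
        have h' : v y ≤ v x := by
          rcases eq_or_ne (v x) (v y) with he | hne
          · exact he.ge
          · exact (hV'c.total (hv x).1 (hv y).1).resolve_left h
        exact (vmeet x y).trans (inf_eq_right.2 h')
end

section
/- Let L be a finite slim lattice with Jir(L) the union of two disjoint nonempty chains U and V, and suppose L is not a chain. Then for any two incomparable a, b ∈ L, exactly one of the following holds: u(a) < u(b) and v(b) < v(a), or u(b) < u(a) and v(a) < v(b). -/
/-- In a finite slim lattice with `Jir L` the union of two disjoint nonempty chains `U`, `V`,
which is not a chain, for any incomparable `a`, `b` exactly one of the following holds: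
`u a < u b ∧ v b < v a`, or `u b < u a ∧ v a < v b`. -/
theorem stmt_12 {L : Type*} [Lattice L] [Fintype L] [OrderBot L] (U V : Set L)
    (hU : IsChain (· ≤ ·) U) (hV : IsChain (· ≤ ·) V)
    (hUne : U.Nonempty) (hVne : V.Nonempty) (hUV : Disjoint U V)
    (hJ : {a : L | SupIrred a} = U ∪ V)
    (hnc : ¬ IsChain (· ≤ ·) (Set.univ : Set L))
    (u v : L → L)
    (hu : ∀ x : L, u x ∈ insert (⊥ : L) U ∧ u x ≤ x ∧
      ∀ w ∈ insert (⊥ : L) U, w ≤ x → w ≤ u x)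
    (hv : ∀ x : L, v x ∈ insert (⊥ : L) V ∧ v x ≤ x ∧
      ∀ w ∈ insert (⊥ : L) V, w ≤ x → w ≤ v x)
    (a b : L) (hab : ¬ a ≤ b) (hba : ¬ b ≤ a) :
    Xor' (u a < u b ∧ v b < v a) (u b < u a ∧ v a < v b) := by
  -- u and v are monotone
  have humono : ∀ {x y : L}, x ≤ y → u x ≤ u y := fun {x y} hxy =>
    (hu y).2.2 _ (hu x).1 ((hu x).2.1.trans hxy)
  have hvmono : ∀ {x y : L}, x ≤ y → v x ≤ v y := fun {x y} hxy =>
    (hv y).2.2 _ (hv x).1 ((hv x).2.1.trans hxy)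
  -- every element is below u x ⊔ v x
  have key : ∀ x : L, x ≤ u x ⊔ v x := by
    intro x
    induction x using WellFoundedLT.induction with
    | ind x ih =>
      by_cases hx : SupIrred x
      · have hx' : x ∈ U ∪ V := by rw [← hJ]; exact hx
        rcases hx' with h | h
        · exact le_sup_of_le_left ((hu x).2.2 x (Set.mem_insert_of_mem _ h) le_rfl)
        · exact le_sup_of_le_right ((hv x).2.2 x (Set.mem_insert_of_mem _ h) le_rfl)
      · rw [SupIrred, not_and_or] at hx
        rcases hx with h | h
        · have : x = ⊥ := (not_not.mp h).eq_bot
          simp [this]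
        · push_neg at h
          obtain ⟨c, d, hcd, hc, hd⟩ := h
          have hcx : c < x := lt_of_le_of_ne (hcd ▸ le_sup_left) hc
          have hdx : d < x := lt_of_le_of_ne (hcd ▸ le_sup_right) hd
          calc x = c ⊔ d := hcd.symm
            _ ≤ (u c ⊔ v c) ⊔ (u d ⊔ v d) := sup_le_sup (ih c hcx) (ih d hdx)
            _ ≤ u x ⊔ v x := by
                refine sup_le (sup_le ?_ ?_) (sup_le ?_ ?_)
                · exact le_sup_of_le_left (humono hcx.le)
                · exact le_sup_of_le_right (hvmono hcx.le)
                · exact le_sup_of_le_left (humono hdx.le)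
                · exact le_sup_of_le_right (hvmono hdx.le)
  -- order characterization
  have hle : ∀ {x y : L}, u x ≤ u y → v x ≤ v y → x ≤ y := by
    intro x y h1 h2
    exact (key x).trans ((sup_le_sup h1 h2).trans (sup_le (hu y).2.1 (hv y).2.1))
  -- comparability within chains
  have hUchain : IsChain (· ≤ ·) (insert (⊥ : L) U) :=
    hU.insert (fun c _ _ => Or.inl bot_le)
  have hVchain : IsChain (· ≤ ·) (insert (⊥ : L) V) :=
    hV.insert (fun c _ _ => Or.inl bot_le)
  have hucomp : u a ≤ u b ∨ u b ≤ u a := by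
    rcases eq_or_ne (u a) (u b) with h | h
    · exact Or.inl h.le
    · exact hUchain (hu a).1 (hu b).1 h
  have hvcomp : v a ≤ v b ∨ v b ≤ v a := by
    rcases eq_or_ne (v a) (v b) with h | h
    · exact Or.inl h.le
    · exact hVchain (hv a).1 (hv b).1 h
  -- from incomparability derive strict inequalities
  have h1 : ¬ (u a ≤ u b) ∨ ¬ (v a ≤ v b) := by
    by_contra h
    push_neg at h
    exact hab (hle h.1 h.2)
  have h2 : ¬ (u b ≤ u a) ∨ ¬ (v b ≤ v a) := by
    by_contra h
    push_neg at h
    exact hba (hle h.1 h.2)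
  rcases h1 with h1 | h1 <;> rcases h2 with h2 | h2
  · exact absurd (hucomp.resolve_left h1) h2
  · exact Or.inr ⟨⟨lt_of_le_not_ge (hucomp.resolve_left h1) h1,
      lt_of_le_not_ge (hvcomp.resolve_right h2) h2⟩, fun hh => h1 hh.1.le⟩
  · exact Or.inl ⟨⟨lt_of_le_not_ge (hucomp.resolve_right h2) h2,
      lt_of_le_not_ge (hvcomp.resolve_left h1) h1⟩, fun hh => h2 hh.1.le⟩
  · exact absurd (hvcomp.resolve_left h1) h2
end

section
/- Let L be a finite slim lattice and let a, b ∈ L be incomparable with c = a∧b. If d ∈ [c,a] and e ∈ [c,a], then d and e are comparable; moreover d ∧ e and d ∨ e both lie in [c,a]. -/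
open Classical in
noncomputable def uu {L : Type*} [Lattice L] [Fintype L] [OrderBot L] (U : Set L) (x : L) : L :=
  (Finset.univ.filter (fun p => p ∈ U ∧ p ≤ x)).sup id

section
variable {L : Type*} [Lattice L] [Fintype L] [OrderBot L] (U : Set L) (x : L)

lemma uu_le : uu U x ≤ x := by
  classical
  apply Finset.sup_le
  intro p hp
  simp only [uu, Finset.mem_filter] at hp ⊢
  exact hp.2.2

lemma le_uu {p : L} (hp : p ∈ U) (hpx : p ≤ x) : p ≤ uu U x := by
  classical
  have : p ∈ Finset.univ.filter (fun p => p ∈ U ∧ p ≤ x) := by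
    simp [hp, hpx]
  unfold uu
  convert Finset.le_sup (f := id) this <;> rfl

lemma uu_mem (hU : IsChain (· ≤ ·) U) : uu U x = ⊥ ∨ uu U x ∈ U := by
  classical
  by_cases h : (Finset.univ.filter (fun p => p ∈ U ∧ p ≤ x)).Nonempty
  · right
    have hs : ∀ p ∈ Finset.univ.filter (fun p => p ∈ U ∧ p ≤ x), p ∈ U := by
      intro p hp; simp only [Finset.mem_filter] at hp; exact hp.2.1
    have hsc : SupClosed U := by
      intro p hp q hq
      rcases hU.total hp hq with h | h
      · simpa [sup_eq_right.2 h] using hq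
      · simpa [sup_eq_left.2 h] using hp
    have := hsc.finsetSup'_mem h hs
    rwa [Finset.sup'_eq_sup] at this
  · left
    rw [Finset.not_nonempty_iff_eq_empty] at h
    simp [uu, h]

lemma le_uu_sup {V : Set L} (hJ : {a : L | SupIrred a} = U ∪ V) :
    x ≤ uu U x ⊔ uu V x := by
  obtain ⟨s, hs, hirr⟩ := exists_supIrred_decomposition x
  conv_lhs => rw [← hs]
  apply Finset.sup_le
  intro p hp
  have hpx : p ≤ x := hs ▸ Finset.le_sup (f := id) hp
  have : p ∈ U ∪ V := hJ ▸ hirr hp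
  rcases this with h | h
  · exact le_sup_of_le_left (le_uu U x h hpx)
  · exact le_sup_of_le_right (le_uu V x h hpx)

end

lemma core {L : Type*} [Lattice L] [Fintype L] [OrderBot L] (U V : Set L)
    (hU : IsChain (· ≤ ·) U) (hV : IsChain (· ≤ ·) V)
    (hJ : {a : L | SupIrred a} = U ∪ V)
    (a b : L) (hba : ¬ b ≤ a) (c : L) (hc : c = a ⊓ b)
    (d e : L) (hd : d ∈ Set.Icc c a) (he : e ∈ Set.Icc c a)
    (hed : ¬ e ≤ d) (hude : ¬ uu U d ≤ e) : False := by
  have hudU : uu U d ∈ U := by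
    rcases uu_mem U d hU with h | h
    · exact absurd (h ▸ bot_le) hude
    · exact h
  -- e ≰ d  ⟹  uu V e ≰ d
  have hve : ¬ uu V e ≤ d := by
    intro hveD
    have hueD : ¬ uu U e ≤ d := by
      intro hueD
      exact hed (le_trans (le_uu_sup U e hJ) (sup_le hueD hveD))
    have hueU : uu U e ∈ U := by
      rcases uu_mem U e hU with h | h
      · exact absurd (h ▸ bot_le) hueD
      · exact h
    rcases hU.total hudU hueU with h | h
    · exact hude (le_trans h (uu_le U e))
    · exact hueD (le_trans h (uu_le U d))
  have hveV : uu V e ∈ V := by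
    rcases uu_mem V e hV with h | h
    · exact absurd (h ▸ bot_le) hve
    · exact h
  -- compare uu U b with uu U d
  have hub : uu U b ≤ c := by
    have hle : uu U b ≤ uu U d := by
      rcases uu_mem U b hU with h | h
      · exact h ▸ bot_le
      · rcases hU.total h hudU with h' | h'
        · exact h'
        · exfalso
          apply hude
          have : uu U d ≤ a ⊓ b :=
            le_inf (le_trans (uu_le U d) hd.2) (le_trans h' (uu_le U b))
          exact le_trans (hc ▸ this) he.1
    exact hc ▸ le_inf (le_trans hle (le_trans (uu_le U d) hd.2)) (uu_le U b)
  have hvb : uu V b ≤ c := by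
    have hle : uu V b ≤ uu V e := by
      rcases uu_mem V b hV with h | h
      · exact h ▸ bot_le
      · rcases hV.total h hveV with h' | h'
        · exact h'
        · exfalso
          apply hve
          have : uu V e ≤ a ⊓ b :=
            le_inf (le_trans (uu_le V e) he.2) (le_trans h' (uu_le V b))
          exact le_trans (hc ▸ this) hd.1
    exact hc ▸ le_inf (le_trans hle (le_trans (uu_le V e) he.2)) (uu_le V b)
  exact hba (le_trans (le_uu_sup U b hJ) (le_trans (sup_le hub hvb) (hc ▸ inf_le_left)))

/-- In a finite slim lattice, for incomparable `a`, `b` with `c = a ⊓ b`, any two elements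
of the interval `[c, a]` are comparable, and their meet and join lie in `[c, a]`. -/
theorem stmt_15 {L : Type*} [Lattice L] [Fintype L] [OrderBot L] (U V : Set L)
    (hU : IsChain (· ≤ ·) U) (hV : IsChain (· ≤ ·) V)
    (hJ : {a : L | SupIrred a} = U ∪ V)
    (a b : L) (hab : ¬ a ≤ b) (hba : ¬ b ≤ a) (c : L) (hc : c = a ⊓ b)
    (d e : L) (hd : d ∈ Set.Icc c a) (he : e ∈ Set.Icc c a) :
    (d ≤ e ∨ e ≤ d) ∧ d ⊓ e ∈ Set.Icc c a ∧ d ⊔ e ∈ Set.Icc c a := by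
  refine ⟨?_, ⟨le_inf hd.1 he.1, le_trans inf_le_left hd.2⟩,
    ⟨le_trans hd.1 le_sup_left, sup_le hd.2 he.2⟩⟩
  by_contra h
  push_neg at h
  obtain ⟨hde, hed⟩ := h
  have hsplit : ¬ uu U d ≤ e ∨ ¬ uu V d ≤ e := by
    by_contra h'
    push_neg at h'
    exact hde (le_trans (le_uu_sup U d hJ) (sup_le h'.1 h'.2))
  rcases hsplit with h' | h'
  · exact core U V hU hV hJ a b hba c hc d e hd he hed h'
  · exact core V U hV hU (by rw [hJ, Set.union_comm]) a b hba c hc d e hd he hed h'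
end

section
/- Let K be the eight-element lattice with elements a < x, a < b ≤ y ≤ z, b ≤ t ≤ c, x ∨ b = y, x ∧ t = a, z ∧ t = b, z ∧ c = y, z ∨ t = d = top, where [a,b], [b,z], [y,c] are the constituent chains (the lattice of property P(8,1)). If L is a finite slim semimodular lattice, S a retract of L, and g : K → L a lattice embedding with g(a), g(b), g(c), g(d) ∈ S, then g(y) ∈ S. -/
section SlimToolkit

variable {L : Type*} [Lattice L] [Fintype L] [OrderBot L]

noncomputable def muFn {L : Type*} [Lattice L] [Fintype L] [OrderBot L] (U : Set L) (s : L) : L :=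
  (@Finset.filter L (fun j => j ∈ U ∧ j ≤ s) (Classical.decPred _) Finset.univ).sup id

variable {U V : Set L}

theorem le_muFn {j s : L} (hj : j ∈ U) (hle : j ≤ s) : j ≤ muFn U s :=
  Finset.le_sup (f := id)
    ((@Finset.mem_filter L (fun j => j ∈ U ∧ j ≤ s) (Classical.decPred _) Finset.univ j).2
      ⟨Finset.mem_univ j, hj, hle⟩)

theorem muFn_le' {s m : L} (h : ∀ j ∈ U, j ≤ s → j ≤ m) : muFn U s ≤ m := by
  refine Finset.sup_le fun j hj => ?_
  have hj' := (@Finset.mem_filter L (fun j => j ∈ U ∧ j ≤ s) (Classical.decPred _)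
    Finset.univ j).1 hj
  exact h j hj'.2.1 hj'.2.2

theorem muFn_le {s : L} : muFn U s ≤ s := muFn_le' fun _ _ h => h

theorem muFn_mono {s m : L} (h : s ≤ m) : muFn U s ≤ muFn U m :=
  muFn_le' fun _ hj hle => le_muFn hj (hle.trans h)

theorem muFn_mem (hU : IsChain (· ≤ ·) U) (s : L) :
    muFn U s = ⊥ ∨ (muFn U s ∈ U ∧ muFn U s ≤ s) := by
  unfold muFn
  refine Finset.sup_induction (p := fun r => r = ⊥ ∨ (r ∈ U ∧ r ≤ s)) (Or.inl rfl) ?_ ?_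
  · rintro a₁ (rfl | ⟨ha1, hle1⟩) a₂ (rfl | ⟨ha2, hle2⟩)
    · left; simp
    · right; rw [bot_sup_eq]; exact ⟨ha2, hle2⟩
    · right; rw [sup_bot_eq]; exact ⟨ha1, hle1⟩
    · by_cases heq : a₁ = a₂
      · subst heq; right; rw [sup_idem]; exact ⟨ha1, hle1⟩
      · rcases hU ha1 ha2 heq with h | h
        · right; rw [sup_eq_right.2 h]; exact ⟨ha2, hle2⟩
        · right; rw [sup_eq_left.2 h]; exact ⟨ha1, hle1⟩
  · intro j hj
    have hj' := (@Finset.mem_filter L (fun j => j ∈ U ∧ j ≤ s) (Classical.decPred _)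
      Finset.univ j).1 hj
    exact Or.inr hj'.2

theorem muFn_comp (hU : IsChain (· ≤ ·) U) (s m : L) :
    muFn U s ≤ muFn U m ∨ muFn U m ≤ muFn U s := by
  rcases muFn_mem hU s with h1 | ⟨h1, _⟩
  · left; rw [h1]; exact bot_le
  · rcases muFn_mem hU m with h2 | ⟨h2, _⟩
    · right; rw [h2]; exact bot_le
    · by_cases heq : muFn U s = muFn U m
      · left; exact heq.le
      · exact hU h1 h2 heq

theorem decomp (hJ : {a : L | SupIrred a} = U ∪ V) (s : L) :
    s = muFn U s ⊔ muFn V s := by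
  refine le_antisymm ?_ (sup_le muFn_le muFn_le)
  obtain ⟨F, hF, hirr⟩ := exists_supIrred_decomposition s
  conv_lhs => rw [← hF]
  refine Finset.sup_le fun j hj => ?_
  have hjs : j ≤ s := hF ▸ Finset.le_sup (f := id) hj
  have : j ∈ U ∪ V := hJ ▸ (hirr hj)
  rcases this with h | h
  · exact (le_muFn h hjs).trans le_sup_left
  · exact (le_muFn h hjs).trans le_sup_right

theorem muFn_inf (hU : IsChain (· ≤ ·) U) (s m : L) :
    muFn U (s ⊓ m) = muFn U s ⊓ muFn U m := by
  refine le_antisymm (le_inf (muFn_mono inf_le_left) (muFn_mono inf_le_right)) ?_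
  rcases muFn_comp hU s m with h | h
  · rw [inf_eq_left.2 h]
    rcases muFn_mem hU s with hb | ⟨hmem, hle⟩
    · rw [hb]; exact bot_le
    · exact le_muFn hmem (le_inf hle (h.trans muFn_le))
  · rw [inf_eq_right.2 h]
    rcases muFn_mem hU m with hb | ⟨hmem, hle⟩
    · rw [hb]; exact bot_le
    · exact le_muFn hmem (le_inf (h.trans muFn_le) hle)

theorem le_of_mu (hJ : {a : L | SupIrred a} = U ∪ V) {s m : L}
    (h1 : muFn U s ≤ m) (h2 : muFn V s ≤ m) : s ≤ m :=
  (decomp hJ s).le.trans (sup_le h1 h2)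

theorem eq_of_mu (hJ : {a : L | SupIrred a} = U ∪ V) {s m : L}
    (h1 : muFn U s = muFn U m) (h2 : muFn V s = muFn V m) : s = m := by
  rw [decomp hJ s, decomp hJ m, h1, h2]

/-- The core combinatorial argument, for a fixed orientation of the chains. -/
theorem aux_main (hU : IsChain (· ≤ ·) U) (hV : IsChain (· ≤ ·) V)
    (hJ : {a : L | SupIrred a} = U ∪ V)
    (a b c d x y z t u v w y' : L)
    (hab : a ≤ b) (htb : t ≠ b) (hyc : y ≠ c)
    (e_xb : x ⊓ b = a) (e_xt : x ⊓ t = a) (e_xtj : x ⊔ t = c)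
    (e_zt : z ⊓ t = b) (e_zc : z ⊓ c = y) (e_ztj : z ⊔ t = d) (h14 : c < d)
    (e_ub : u ⊓ b = a) (e_uw : u ⊓ w = a) (e_uwj : u ⊔ w = c)
    (e_vw : v ⊓ w = b) (e_vwj : v ⊔ w = d) (e_vc : v ⊓ c = y')
    (hor1 : muFn U b < muFn U x) (hor2 : muFn V x < muFn V b) :
    y' = y := by
  -- basic order facts
  have bt : b ≤ t := by rw [← e_zt]; exact inf_le_right
  have bz : b ≤ z := by rw [← e_zt]; exact inf_le_left
  have tc : t ≤ c := by rw [← e_xtj]; exact le_sup_right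
  have xc : x ≤ c := by rw [← e_xtj]; exact le_sup_left
  have bc : b ≤ c := bt.trans tc
  have ylec : y ≤ c := by rw [← e_zc]; exact inf_le_right
  have bley : b ≤ y := by rw [← e_zc]; exact le_inf bz bc
  have bw : b ≤ w := by rw [← e_vw]; exact inf_le_right
  have wc : w ≤ c := by rw [← e_uwj]; exact le_sup_right
  have uc : u ≤ c := by rw [← e_uwj]; exact le_sup_left
  -- coordinates of a
  have d1 : muFn U a = muFn U b := by
    rw [← e_xb, muFn_inf hU]; exact inf_eq_right.2 hor1.le
  have d1' : muFn V a = muFn V x := by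
    rw [← e_xb, muFn_inf hV]; exact inf_eq_left.2 hor2.le
  -- coordinates of t
  have d2 : muFn U t = muFn U b := by
    have h := muFn_inf hU x t
    rw [e_xt, d1] at h
    rcases muFn_comp hU x t with hcp | hcp
    · exact absurd (h.trans (inf_eq_left.2 hcp)) hor1.ne
    · exact (h.trans (inf_eq_right.2 hcp)).symm
  have d2' : muFn V b < muFn V t := by
    refine lt_of_le_of_ne (muFn_mono bt) fun heq => htb ?_
    refine le_antisymm (le_of_mu hJ (d2.le.trans muFn_le) (heq.symm.le.trans muFn_le)) bt
  -- coordinates of z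
  have d3 : muFn V z = muFn V b := by
    have h := muFn_inf hV z t
    rw [e_zt] at h
    rcases muFn_comp hV z t with hcp | hcp
    · exact (h.trans (inf_eq_left.2 hcp)).symm
    · exact absurd (h.trans (inf_eq_right.2 hcp)) d2'.ne
  -- coordinates of c
  have d4 : muFn U b < muFn U c := hor1.trans_le (muFn_mono xc)
  have d4' : muFn V b < muFn V c := d2'.trans_le (muFn_mono tc)
  -- sigma c <= sigma z
  have hzc : muFn U c ≤ muFn U z := by
    rcases muFn_comp hU z c with hcp | hcp
    · exfalso
      have hzlec : z ≤ c := le_of_mu hJ (hcp.trans muFn_le)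
        ((d3.le.trans (muFn_le)).trans bc)
      have : d ≤ c := by rw [← e_ztj]; exact sup_le hzlec tc
      exact h14.not_ge this
    · exact hcp
  -- coordinates of y
  have d6 : muFn U y = muFn U c := by
    have h := muFn_inf hU z c
    rw [e_zc] at h
    rw [h, inf_eq_right.2 hzc]
  have d6' : muFn V y = muFn V b := by
    have h := muFn_inf hV z c
    rw [e_zc] at h
    rw [h, d3, inf_eq_left.2 d4'.le]
  -- coordinates of u
  have e1 : muFn V u = muFn V x := by
    have h := muFn_inf hV u b
    rw [e_ub, d1'] at h
    rcases muFn_comp hV u b with hcp | hcp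
    · exact (h.trans (inf_eq_left.2 hcp)).symm
    · exact absurd (h.trans (inf_eq_right.2 hcp)) hor2.ne
  -- main case analysis on sigma of u and w
  have huw := muFn_inf hU u w
  rw [e_uw, d1] at huw
  rcases muFn_comp hU u w with hcp | hcp
  · -- u = a, leads to contradiction
    exfalso
    have hua : u = a := by
      refine eq_of_mu hJ ?_ (e1.trans d1'.symm)
      exact (huw.trans (inf_eq_left.2 hcp)).symm.trans d1.symm
    have hcw : c = w := by
      rw [← e_uwj, hua, sup_eq_right.2 (hab.trans bw)]
    have hyb : v ⊓ c = b := by rw [hcw]; exact e_vw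
    have hvU : muFn U v = muFn U b := by
      have h := muFn_inf hU v c
      rw [hyb] at h
      rcases muFn_comp hU v c with hcp2 | hcp2
      · exact (h.trans (inf_eq_left.2 hcp2)).symm
      · exact absurd (h.trans (inf_eq_right.2 hcp2)) d4.ne
    have hvV : muFn V v = muFn V b := by
      have h := muFn_inf hV v c
      rw [hyb] at h
      rcases muFn_comp hV v c with hcp2 | hcp2
      · exact (h.trans (inf_eq_left.2 hcp2)).symm
      · exact absurd (h.trans (inf_eq_right.2 hcp2)) d4'.ne
    have hvb : v = b := eq_of_mu hJ hvU hvV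
    have : d = w := by rw [← e_vwj, hvb, sup_eq_right.2 bw]
    exact h14.ne (this.trans hcw.symm).symm
  · -- sigma w = sigma b
    have e3b : muFn U w = muFn U b := (huw.trans (inf_eq_right.2 hcp)).symm
    by_cases hwb : muFn V w = muFn V b
    · -- w = b, leads to contradiction
      exfalso
      have hweq : w = b := eq_of_mu hJ e3b hwb
      have hcub : c = u ⊔ b := by rw [← e_uwj, hweq]
      have huy : u ≤ y := by
        refine le_of_mu hJ ?_ ?_
        · exact ((muFn_mono uc).trans d6.ge).trans muFn_le
        · exact ((e1.le.trans hor2.le).trans muFn_le).trans bley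
      have : c ≤ y := by rw [hcub]; exact sup_le huy bley
      exact hyc (le_antisymm ylec this)
    · have hbw' : muFn V b < muFn V w := lt_of_le_of_ne (muFn_mono bw) (Ne.symm hwb)
      have e5 : muFn V v = muFn V b := by
        have h := muFn_inf hV v w
        rw [e_vw] at h
        rcases muFn_comp hV v w with hcp2 | hcp2
        · exact (h.trans (inf_eq_left.2 hcp2)).symm
        · exact absurd (h.trans (inf_eq_right.2 hcp2)) hbw'.ne
      have e7 : muFn V y' = muFn V b := by
        have h := muFn_inf hV v c
        rw [e_vc] at h
        rw [h, e5]; exact inf_eq_left.2 d4'.le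
      have hyu := muFn_inf hU v c
      rw [e_vc] at hyu
      rcases muFn_comp hU v c with hcp2 | hcp2
      · -- sigma v <= sigma c : y' = v, contradiction
        exfalso
        have hy'v : y' = v := by
          refine eq_of_mu hJ ?_ (e7.trans e5.symm)
          rw [hyu]; exact inf_eq_left.2 hcp2
        have hvc : v ≤ c := by
          rw [← hy'v]; rw [← e_vc]; exact inf_le_right
        have : d ≤ c := by rw [← e_vwj]; exact sup_le hvc wc
        exact h14.not_ge this
      · -- sigma c <= sigma v : y' = y
        have hy'U : muFn U y' = muFn U c := by rw [hyu]; exact inf_eq_right.2 hcp2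
        exact eq_of_mu hJ (hy'U.trans d6.symm) (e7.trans d6'.symm)

end SlimToolkit

/-- Property `P(8,1)`: let `L` be a finite slim semimodular lattice, `f` a retraction of `L`
with retract `S = f(L)`, and let `a, b, c, d, x, y, z, t` be the (pairwise distinct) images
of the eight elements of the lattice `K` of property `P(8,1)` under a lattice embedding
`g : K → L`, so that `a < x`, `a < b ≤ y ≤ z`, `b ≤ t ≤ c`, `x ⊔ b = y`, `x ⊓ b = a`,
`x ⊓ t = a`, `x ⊔ t = c`, `z ⊓ t = b`, `z ⊓ c = y`, `z ⊔ t = d`, `c < d`, `z < d`.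
If `a, b, c, d` belong to `S`, then `y ∈ S`. -/
theorem stmt_16 {L : Type*} [Lattice L] [Fintype L] [OrderBot L] (U V : Set L)
    (hU : IsChain (· ≤ ·) U) (hV : IsChain (· ≤ ·) V)
    (hJ : {a : L | SupIrred a} = U ∪ V)
    (hsm : ∀ p q : L, p ⊓ q ⋖ p → q ⋖ p ⊔ q)
    (f : L → L)
    (hmeet : ∀ p q : L, f (p ⊓ q) = f p ⊓ f q)
    (hjoin : ∀ p q : L, f (p ⊔ q) = f p ⊔ f q)
    (hidem : ∀ p : L, f (f p) = f p)
    (a b c d x y z t : L)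
    (hnodup : List.Nodup [a, b, c, d, x, y, z, t])
    (h1 : a < x) (h2 : a < b) (h3 : b ≤ y) (h4 : y ≤ z) (h5 : b ≤ t) (h6 : t ≤ c)
    (h7 : x ⊔ b = y) (h8 : x ⊓ b = a) (h9 : x ⊓ t = a) (h10 : x ⊔ t = c)
    (h11 : z ⊓ t = b) (h12 : z ⊓ c = y) (h13 : z ⊔ t = d) (h14 : c < d) (h15 : z < d)
    (hfa : f a = a) (hfb : f b = b) (hfc : f c = c) (hfd : f d = d) :
    f y = y := by
  -- distinctness facts
  have htb : t ≠ b := by rintro rfl; simp at hnodup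
  have hyc : y ≠ c := by rintro rfl; simp at hnodup
  -- the images under f
  have e_ub : f x ⊓ b = a := by
    have := hmeet x b; rw [h8, hfa, hfb] at this; exact this.symm
  have e_uw : f x ⊓ f t = a := by
    have := hmeet x t; rw [h9, hfa] at this; exact this.symm
  have e_uwj : f x ⊔ f t = c := by
    have := hjoin x t; rw [h10, hfc] at this; exact this.symm
  have e_vw : f z ⊓ f t = b := by
    have := hmeet z t; rw [h11, hfb] at this; exact this.symm
  have e_vwj : f z ⊔ f t = d := by
    have := hjoin z t; rw [h13, hfd] at this; exact this.symm
  have e_vc : f z ⊓ c = f y := by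
    have := hmeet z c; rw [h12, hfc] at this; exact this.symm
  -- x and b are incomparable
  have hxb : ¬ x ≤ b := fun hh => h1.ne (h8.symm.trans (inf_eq_left.2 hh))
  have hbx : ¬ b ≤ x := fun hh => h2.ne (h8.symm.trans (inf_eq_right.2 hh))
  -- orientation case split
  rcases muFn_comp hU b x with hc1 | hc1 <;> rcases muFn_comp hV b x with hc2 | hc2
  · exact absurd (le_of_mu hJ (hc1.trans muFn_le) (hc2.trans muFn_le)) hbx
  · -- sigma b <= sigma x, tau x <= tau b : standard orientation
    have hor1 : muFn U b < muFn U x := by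
      refine lt_of_le_of_ne hc1 fun heq => hxb ?_
      exact le_of_mu hJ (heq.symm.le.trans muFn_le) (hc2.trans muFn_le)
    have hor2 : muFn V x < muFn V b := by
      refine lt_of_le_of_ne hc2 fun heq => hbx ?_
      exact le_of_mu hJ (hc1.trans muFn_le) (heq.ge.trans muFn_le)
    exact aux_main hU hV hJ a b c d x y z t (f x) (f z) (f t) (f y)
      h2.le htb hyc h8 h9 h10 h11 h12 h13 h14 e_ub e_uw e_uwj e_vw e_vwj e_vc hor1 hor2
  · -- swapped orientation
    have hJ' : {a : L | SupIrred a} = V ∪ U := by rw [hJ, Set.union_comm]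
    have hor1 : muFn V b < muFn V x := by
      refine lt_of_le_of_ne hc2 fun heq => hxb ?_
      exact le_of_mu hJ (hc1.trans muFn_le) (heq.symm.le.trans muFn_le)
    have hor2 : muFn U x < muFn U b := by
      refine lt_of_le_of_ne hc1 fun heq => hbx ?_
      exact le_of_mu hJ (heq.ge.trans muFn_le) (hc2.trans muFn_le)
    exact aux_main hV hU hJ' a b c d x y z t (f x) (f z) (f t) (f y)
      h2.le htb hyc h8 h9 h10 h11 h12 h13 h14 e_ub e_uw e_uwj e_vw e_vwj e_vc hor1 hor2
  · exact absurd (le_of_mu hJ (hc1.trans muFn_le) (hc2.trans muFn_le)) hxb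
end
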